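/- Let P be a probability measure on a measurable space 𝒳, K ≥ 2, M > 0, c > 0, q ≥ 1, H > 0, ε ≥ 0, and t ∈ (0,1). Let μ_1,…,μ_K : 𝒳 → ℝ be measurable with |μ_j(x)| ≤ M for all j, x, and let j* : 𝒳 → {1,…,K} be measurable with μ_{j*(x)}(x) = max_j μ_j(x) for all x. Assume the noise condition P({x : μ_{j*(x)}(x) − max_{j ≠ j*(x)} μ_j(x) ≤ M t}) ≤ c t^q. Let μ̃_1,…,μ̃_K : 𝒳 → ℝ be measurable with sup_x |μ̃_j(x) − μ_j(x)| ≤ ε for every j, and define the randomized policy π̃(x) = Softmax_H(μ̃_1(x),…,μ̃_K(x)). Then ∫_𝒳 [ μ_{j*(x)}(x) − Σ_{j=1}^K μ_j(x) π̃_j(x) ] dP(x) ≤ 2 c M t^q + M K² exp((−M t + 2ε)/H). (The bias bound (I₂) in the proof of Theorem 2.) -/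

import Mathlib

open MeasureTheory

/-- The bias bound `(I₂)` in the proof of Theorem 2: under the Tsybakov-type noise condition
(the set of covariates where the best-action gap is at most `Mt` has probability at most `c t^q`),
the temperature-`H` softmax policy built from `ε`-accurate estimates `μ̃_j` of the conditional
rewards `μ_j` has regret against the deterministic optimal policy at most
`2cM t^q + M K² exp((−Mt + 2ε)/H)`. -/
theorem stmt_14
    {𝒳 : Type*} [MeasurableSpace 𝒳]
    (P : Measure 𝒳) [IsProbabilityMeasure P]
    (K : ℕ) (hK : 2 ≤ K)
    (M c q H ε t : ℝ) (hM : 0 < M) (hc : 0 < c) (hq : 1 ≤ q) (hH : 0 < H)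
    (hε : 0 ≤ ε) (ht : t ∈ Set.Ioo (0:ℝ) 1)
    (μ : Fin K → 𝒳 → ℝ) (hμmeas : ∀ j, Measurable (μ j))
    (hμbdd : ∀ j z, |μ j z| ≤ M)
    (jstar : 𝒳 → Fin K) (hjmeas : Measurable jstar)
    (hjmax : ∀ z j, μ j z ≤ μ (jstar z) z)
    (hnoise : P {z | ∃ j, j ≠ jstar z ∧ μ (jstar z) z - μ j z ≤ M * t} ≤
      ENNReal.ofReal (c * t ^ q))
    (μt : Fin K → 𝒳 → ℝ) (hμtmeas : ∀ j, Measurable (μt j))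
    (hμt : ∀ j z, |μt j z - μ j z| ≤ ε)
    (πt : 𝒳 → Fin K → ℝ)
    (hπt : ∀ z j, πt z j = Real.exp (μt j z / H) / ∑ k, Real.exp (μt k z / H)) :
    (∫ z, (μ (jstar z) z - ∑ j, μ j z * πt z j) ∂P) ≤
      2 * c * M * t ^ q + M * K ^ 2 * Real.exp ((-(M * t) + 2 * ε) / H) := by
  obtain ⟨ht0, ht1⟩ := ht
  have hK0 : 0 < K := by omega
  haveI : NeZero K := ⟨hK0.ne'⟩
  set E : ℝ := Real.exp ((-(M * t) + 2 * ε) / H) with hE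
  have hEpos : 0 < E := Real.exp_pos _
  set A : Set 𝒳 := {z | ∃ j, j ≠ jstar z ∧ μ (jstar z) z - μ j z ≤ M * t} with hA
  have hstar : Measurable fun z => μ (jstar z) z := by
    have h1 : Measurable fun p : 𝒳 × Fin K => μ p.2 p.1 :=
      measurable_from_prod_countable_left fun j => hμmeas j
    exact h1.comp (measurable_id.prodMk hjmeas)
  have hAmeas : MeasurableSet A := by
    have hrep : A = ⋃ j, ((jstar ⁻¹' {j})ᶜ ∩ {z | μ (jstar z) z - μ j z ≤ M * t}) := by
      ext z
      simp only [hA, Set.mem_setOf_eq, Set.mem_iUnion, Set.mem_inter_iff, Set.mem_compl_iff,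
        Set.mem_preimage, Set.mem_singleton_iff]
      constructor
      · rintro ⟨j, h1, h2⟩; exact ⟨j, fun h => h1 h.symm, h2⟩
      · rintro ⟨j, h1, h2⟩; exact ⟨j, fun h => h1 h.symm, h2⟩
    rw [hrep]
    refine MeasurableSet.iUnion fun j => ?_
    exact ((hjmeas (measurableSet_singleton j)).compl).inter
      (measurableSet_le (hstar.sub (hμmeas j)) measurable_const)
  have hSpos : ∀ z, 0 < ∑ k, Real.exp (μt k z / H) :=
    fun z => Finset.sum_pos (fun k _ => Real.exp_pos _) Finset.univ_nonempty
  have hπnn : ∀ z j, 0 ≤ πt z j := by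
    intro z j; rw [hπt]; positivity
  have hπsum : ∀ z, ∑ j, πt z j = 1 := by
    intro z
    simp only [hπt]
    rw [← Finset.sum_div, div_self (hSpos z).ne']
  have hle2M : ∀ z (j : Fin K), μ (jstar z) z - μ j z ≤ 2 * M := by
    intro z j
    have h1 := abs_le.mp (hμbdd (jstar z) z)
    have h2 := abs_le.mp (hμbdd j z)
    linarith [h1.2, h2.1]
  have hfz : ∀ z, μ (jstar z) z - ∑ j, μ j z * πt z j
      = ∑ j, (μ (jstar z) z - μ j z) * πt z j := by
    intro z
    simp only [sub_mul]
    rw [Finset.sum_sub_distrib, ← Finset.mul_sum, hπsum z, mul_one]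
  have hf0 : ∀ z, 0 ≤ μ (jstar z) z - ∑ j, μ j z * πt z j := by
    intro z
    rw [hfz z]
    exact Finset.sum_nonneg fun j _ =>
      mul_nonneg (sub_nonneg.mpr (hjmax z j)) (hπnn z j)
  have hf2M : ∀ z, μ (jstar z) z - ∑ j, μ j z * πt z j ≤ 2 * M := by
    intro z
    rw [hfz z]
    calc ∑ j, (μ (jstar z) z - μ j z) * πt z j
        ≤ ∑ j : Fin K, 2 * M * πt z j :=
          Finset.sum_le_sum fun j _ =>
            mul_le_mul_of_nonneg_right (hle2M z j) (hπnn z j)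
      _ = 2 * M := by rw [← Finset.mul_sum, hπsum z, mul_one]
  have hπle : ∀ z (j : Fin K), M * t < μ (jstar z) z - μ j z → πt z j ≤ E := by
    intro z j hgap
    rw [hπt]
    have h1 : Real.exp (μt (jstar z) z / H) ≤ ∑ k, Real.exp (μt k z / H) :=
      Finset.single_le_sum (f := fun k => Real.exp (μt k z / H))
        (fun k _ => (Real.exp_pos _).le) (Finset.mem_univ _)
    calc Real.exp (μt j z / H) / ∑ k, Real.exp (μt k z / H)
        ≤ Real.exp (μt j z / H) / Real.exp (μt (jstar z) z / H) := by
          gcongr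
      _ = Real.exp ((μt j z - μt (jstar z) z) / H) := by
          rw [← Real.exp_sub, div_sub_div_same]
      _ ≤ E := by
          rw [hE, Real.exp_le_exp]
          have h2 := abs_le.mp (hμt j z)
          have h3 := abs_le.mp (hμt (jstar z) z)
          gcongr
          linarith [h2.2, h3.1]
  have hMK2E : 0 ≤ M * (K : ℝ) ^ 2 * E := by positivity
  have key : ∀ z, μ (jstar z) z - ∑ j, μ j z * πt z j ≤
      A.indicator (fun _ => 2 * M) z + M * (K : ℝ) ^ 2 * E := by
    intro z
    by_cases hz : z ∈ A
    · rw [Set.indicator_of_mem hz]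
      linarith [hf2M z]
    · rw [Set.indicator_of_notMem hz]
      have hgap : ∀ j : Fin K, j ≠ jstar z → M * t < μ (jstar z) z - μ j z := by
        intro j hj
        by_contra h
        exact hz ⟨j, hj, le_of_not_gt h⟩
      have hterm : ∀ j : Fin K, (μ (jstar z) z - μ j z) * πt z j ≤ 2 * M * E := by
        intro j
        by_cases hj : j = jstar z
        · subst hj
          simp only [sub_self, zero_mul]
          positivity
        · exact mul_le_mul (hle2M z j) (hπle z j (hgap j hj)) (hπnn z j) (by positivity)
      rw [hfz z]
      calc ∑ j, (μ (jstar z) z - μ j z) * πt z j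
          ≤ ∑ _j : Fin K, 2 * M * E := Finset.sum_le_sum fun j _ => hterm j
        _ = (K : ℝ) * (2 * M * E) := by
            rw [Finset.sum_const, Finset.card_univ, Fintype.card_fin, nsmul_eq_mul]
        _ ≤ 0 + M * (K : ℝ) ^ 2 * E := by
            have hK2 : (2 : ℝ) ≤ (K : ℝ) := by exact_mod_cast hK
            nlinarith [mul_nonneg (mul_nonneg hM.le hEpos.le) (sub_nonneg.mpr hK2),
              hEpos.le, hM.le]
  have hπmeas : ∀ j, Measurable fun z => πt z j := by
    intro j
    have h : (fun z => πt z j)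
        = fun z => Real.exp (μt j z / H) / ∑ k, Real.exp (μt k z / H) :=
      funext fun z => hπt z j
    rw [h]
    exact (((hμtmeas j).div_const H).exp).div
      (Finset.measurable_sum _ fun k _ => ((hμtmeas k).div_const H).exp)
  have hfmeas : Measurable fun z => μ (jstar z) z - ∑ j, μ j z * πt z j :=
    hstar.sub (Finset.measurable_sum _ fun j _ => (hμmeas j).mul (hπmeas j))
  have hfint : Integrable (fun z => μ (jstar z) z - ∑ j, μ j z * πt z j) P := by
    refine ⟨hfmeas.aestronglyMeasurable, ?_⟩
    apply HasFiniteIntegral.of_bounded (C := 2 * M)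
    filter_upwards with z
    rw [Real.norm_eq_abs, abs_le]
    exact ⟨by linarith [hf0 z, hM.le], hf2M z⟩
  have hgint : Integrable
      (fun z => A.indicator (fun _ => 2 * M) z + M * (K : ℝ) ^ 2 * E) P :=
    ((integrable_const (2 * M)).indicator hAmeas).add (integrable_const _)
  have hint := integral_mono hfint hgint key
  rw [integral_add ((integrable_const (2 * M)).indicator hAmeas) (integrable_const _),
    integral_indicator_const _ hAmeas, integral_const, probReal_univ] at hint
  simp only [ENNReal.toReal_one, one_smul, one_mul, smul_eq_mul] at hint
  have hPA : (P A).toReal ≤ c * t ^ q := by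
    have hne : ENNReal.ofReal (c * t ^ q) ≠ ⊤ := ENNReal.ofReal_ne_top
    have h1 := ENNReal.toReal_mono hne hnoise
    rwa [ENNReal.toReal_ofReal (by positivity)] at h1
  have h2 : (P A).toReal * (2 * M) ≤ c * t ^ q * (2 * M) :=
    mul_le_mul_of_nonneg_right hPA (by positivity)
  calc (∫ z, (μ (jstar z) z - ∑ j, μ j z * πt z j) ∂P)
      ≤ (P A).toReal * (2 * M) + M * (K : ℝ) ^ 2 * E := hint
    _ ≤ c * t ^ q * (2 * M) + M * (K : ℝ) ^ 2 * E := by linarith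
    _ = 2 * c * M * t ^ q + M * (K : ℝ) ^ 2 * E := by ring
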